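/- If x, y, z are vectors in (Z/2)^n and a, b, c are nonnegative integers such that the Hamming distances satisfy d(x,y) ≤ a+b, d(x,z) ≤ a+c, and d(y,z) ≤ b+c, then there exists a vector v in (Z/2)^n with d(v,x) ≤ a, d(v,y) ≤ b, and d(v,z) ≤ c. -/

import Mathlib

open Finset

private lemma zmod2_triple : ∀ a b c : ZMod 2, a ≠ b → c ≠ a → c ≠ b → False := by decide

private lemma zmod2_flip : ∀ a b : ZMod 2, a + 1 ≠ b ↔ a = b := by decide

private lemma key_nat (p q r a b c : ℕ) (h1 : p + q ≤ a + b) (h2 : p + r ≤ a + c)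
    (h3 : q + r ≤ b + c) :
    ∃ s t u, s ≤ p ∧ t ≤ q ∧ u ≤ r ∧ (p - s) + t + u ≤ a ∧ s + (q - t) + u ≤ b ∧
      s + t + (r - u) ≤ c := by
  rcases le_or_gt p a with hp | hp
  · rcases le_or_gt q b with hq | hq
    · rcases le_or_gt r c with hr | hr
      · exact ⟨0, 0, 0, by omega⟩
      · exact ⟨0, 0, r - c, by omega⟩
    · exact ⟨0, q - b, 0, by omega⟩
  · exact ⟨p - a, 0, 0, by omega⟩

theorem stmt_0 (n : ℕ) (x y z : Fin n → ZMod 2) (a b c : ℕ)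
    (hxy : hammingDist x y ≤ a + b)
    (hxz : hammingDist x z ≤ a + c)
    (hyz : hammingDist y z ≤ b + c) :
    ∃ v : Fin n → ZMod 2,
      hammingDist v x ≤ a ∧ hammingDist v y ≤ b ∧ hammingDist v z ≤ c := by
  set A : Finset (Fin n) := Finset.univ.filter (fun i => x i ≠ y i ∧ x i ≠ z i) with hA
  set B : Finset (Fin n) := Finset.univ.filter (fun i => y i ≠ x i ∧ y i ≠ z i) with hB
  set C : Finset (Fin n) := Finset.univ.filter (fun i => z i ≠ x i ∧ z i ≠ y i) with hC
  have hdAB : Disjoint A B := by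
    rw [Finset.disjoint_left]
    intro i hiA hiB
    simp only [hA, hB, mem_filter, mem_univ, true_and] at hiA hiB
    exact zmod2_triple (x i) (z i) (y i) hiA.2 hiB.1 hiB.2
  have hdAC : Disjoint A C := by
    rw [Finset.disjoint_left]
    intro i hiA hiC
    simp only [hA, hC, mem_filter, mem_univ, true_and] at hiA hiC
    exact zmod2_triple (x i) (y i) (z i) hiA.1 hiC.1 hiC.2
  have hdBC : Disjoint B C := by
    rw [Finset.disjoint_left]
    intro i hiB hiC
    simp only [hB, hC, mem_filter, mem_univ, true_and] at hiB hiC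
    exact zmod2_triple (y i) (x i) (z i) hiB.1 hiC.2 hiC.1
  have hAB : A.card + B.card ≤ a + b := by
    have hsub : A ∪ B ⊆ Finset.univ.filter (fun i => x i ≠ y i) := by
      intro i hi
      rcases Finset.mem_union.mp hi with h | h <;>
        simp only [hA, hB, mem_filter, mem_univ, true_and] at h ⊢
      · exact h.1
      · exact fun he => h.1 he.symm
    calc A.card + B.card = (A ∪ B).card := (Finset.card_union_of_disjoint hdAB).symm
      _ ≤ _ := Finset.card_le_card hsub
      _ ≤ a + b := hxy
  have hAC : A.card + C.card ≤ a + c := by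
    have hsub : A ∪ C ⊆ Finset.univ.filter (fun i => x i ≠ z i) := by
      intro i hi
      rcases Finset.mem_union.mp hi with h | h <;>
        simp only [hA, hC, mem_filter, mem_univ, true_and] at h ⊢
      · exact h.2
      · exact fun he => h.1 he.symm
    calc A.card + C.card = (A ∪ C).card := (Finset.card_union_of_disjoint hdAC).symm
      _ ≤ _ := Finset.card_le_card hsub
      _ ≤ a + c := hxz
  have hBC : B.card + C.card ≤ b + c := by
    have hsub : B ∪ C ⊆ Finset.univ.filter (fun i => y i ≠ z i) := by
      intro i hi
      rcases Finset.mem_union.mp hi with h | h <;>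
        simp only [hB, hC, mem_filter, mem_univ, true_and] at h ⊢
      · exact h.2
      · exact fun he => h.2 he.symm
    calc B.card + C.card = (B ∪ C).card := (Finset.card_union_of_disjoint hdBC).symm
      _ ≤ _ := Finset.card_le_card hsub
      _ ≤ b + c := hyz
  obtain ⟨s, t, u, hs, ht, hu, hsa, htb, huc⟩ :=
    key_nat A.card B.card C.card a b c hAB hAC hBC
  obtain ⟨S, hSA, hScard⟩ := Finset.exists_subset_card_eq (s := A) (n := s) hs
  obtain ⟨T, hTB, hTcard⟩ := Finset.exists_subset_card_eq (s := B) (n := t) ht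
  obtain ⟨U, hUC, hUcard⟩ := Finset.exists_subset_card_eq (s := C) (n := u) hu
  set v₀ : Fin n → ZMod 2 := fun i => if x i = y i then x i else z i with hv₀
  have hv₀x : ∀ i, v₀ i ≠ x i ↔ i ∈ A := by
    intro i
    simp only [hA, hv₀, mem_filter, mem_univ, true_and]
    exact (by decide : ∀ p q r : ZMod 2, ((if p = q then p else r) ≠ p ↔ p ≠ q ∧ p ≠ r))
      (x i) (y i) (z i)
  have hv₀y : ∀ i, v₀ i ≠ y i ↔ i ∈ B := by
    intro i
    simp only [hB, hv₀, mem_filter, mem_univ, true_and]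
    exact (by decide : ∀ p q r : ZMod 2, ((if p = q then p else r) ≠ q ↔ q ≠ p ∧ q ≠ r))
      (x i) (y i) (z i)
  have hv₀z : ∀ i, v₀ i ≠ z i ↔ i ∈ C := by
    intro i
    simp only [hC, hv₀, mem_filter, mem_univ, true_and]
    exact (by decide : ∀ p q r : ZMod 2, ((if p = q then p else r) ≠ r ↔ r ≠ p ∧ r ≠ q))
      (x i) (y i) (z i)
  set v : Fin n → ZMod 2 := fun i => if i ∈ S ∪ T ∪ U then v₀ i + 1 else v₀ i with hv
  refine ⟨v, ?_, ?_, ?_⟩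
  · -- d(v,x) ≤ a
    have hsub : Finset.univ.filter (fun i => v i ≠ x i) ⊆ (A \ S) ∪ T ∪ U := by
      intro i hi
      simp only [mem_filter, mem_univ, true_and, hv] at hi
      by_cases hmem : i ∈ S ∪ T ∪ U
      · rw [if_pos hmem] at hi
        rcases Finset.mem_union.mp hmem with hm | hm
        · rcases Finset.mem_union.mp hm with hm' | hm'
          · exact absurd ((zmod2_flip _ _).mp hi) ((hv₀x i).mpr (hSA hm'))
          · exact Finset.mem_union.mpr (Or.inl (Finset.mem_union.mpr (Or.inr hm')))
        · exact Finset.mem_union.mpr (Or.inr hm)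
      · rw [if_neg hmem] at hi
        have hiA := (hv₀x i).mp hi
        have hiS : i ∉ S := fun h => hmem (Finset.mem_union.mpr
          (Or.inl (Finset.mem_union.mpr (Or.inl h))))
        exact Finset.mem_union.mpr (Or.inl (Finset.mem_union.mpr
          (Or.inl (Finset.mem_sdiff.mpr ⟨hiA, hiS⟩))))
    calc hammingDist v x ≤ ((A \ S) ∪ T ∪ U).card := Finset.card_le_card hsub
      _ ≤ (A \ S).card + T.card + U.card := by
          calc ((A \ S) ∪ T ∪ U).card ≤ ((A \ S) ∪ T).card + U.card :=
                Finset.card_union_le _ _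
            _ ≤ (A \ S).card + T.card + U.card :=
                Nat.add_le_add_right (Finset.card_union_le _ _) _
      _ ≤ a := by rw [Finset.card_sdiff_of_subset hSA, hScard, hTcard, hUcard]; exact hsa
  · -- d(v,y) ≤ b
    have hsub : Finset.univ.filter (fun i => v i ≠ y i) ⊆ S ∪ (B \ T) ∪ U := by
      intro i hi
      simp only [mem_filter, mem_univ, true_and, hv] at hi
      by_cases hmem : i ∈ S ∪ T ∪ U
      · rw [if_pos hmem] at hi
        rcases Finset.mem_union.mp hmem with hm | hm
        · rcases Finset.mem_union.mp hm with hm' | hm'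
          · exact Finset.mem_union.mpr (Or.inl (Finset.mem_union.mpr (Or.inl hm')))
          · exact absurd ((zmod2_flip _ _).mp hi) ((hv₀y i).mpr (hTB hm'))
        · exact Finset.mem_union.mpr (Or.inr hm)
      · rw [if_neg hmem] at hi
        have hiB := (hv₀y i).mp hi
        have hiT : i ∉ T := fun h => hmem (Finset.mem_union.mpr
          (Or.inl (Finset.mem_union.mpr (Or.inr h))))
        exact Finset.mem_union.mpr (Or.inl (Finset.mem_union.mpr
          (Or.inr (Finset.mem_sdiff.mpr ⟨hiB, hiT⟩))))
    calc hammingDist v y ≤ (S ∪ (B \ T) ∪ U).card := Finset.card_le_card hsub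
      _ ≤ S.card + (B \ T).card + U.card := by
          calc (S ∪ (B \ T) ∪ U).card ≤ (S ∪ (B \ T)).card + U.card :=
                Finset.card_union_le _ _
            _ ≤ S.card + (B \ T).card + U.card :=
                Nat.add_le_add_right (Finset.card_union_le _ _) _
      _ ≤ b := by rw [Finset.card_sdiff_of_subset hTB, hScard, hTcard, hUcard]; exact htb
  · -- d(v,z) ≤ c
    have hsub : Finset.univ.filter (fun i => v i ≠ z i) ⊆ S ∪ T ∪ (C \ U) := by
      intro i hi
      simp only [mem_filter, mem_univ, true_and, hv] at hi
      by_cases hmem : i ∈ S ∪ T ∪ U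
      · rw [if_pos hmem] at hi
        rcases Finset.mem_union.mp hmem with hm | hm
        · exact Finset.mem_union.mpr (Or.inl hm)
        · exact absurd ((zmod2_flip _ _).mp hi) ((hv₀z i).mpr (hUC hm))
      · rw [if_neg hmem] at hi
        have hiC := (hv₀z i).mp hi
        have hiU : i ∉ U := fun h => hmem (Finset.mem_union.mpr (Or.inr h))
        exact Finset.mem_union.mpr (Or.inr (Finset.mem_sdiff.mpr ⟨hiC, hiU⟩))
    calc hammingDist v z ≤ (S ∪ T ∪ (C \ U)).card := Finset.card_le_card hsub
      _ ≤ S.card + T.card + (C \ U).card := by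
          calc (S ∪ T ∪ (C \ U)).card ≤ (S ∪ T).card + (C \ U).card :=
                Finset.card_union_le _ _
            _ ≤ S.card + T.card + (C \ U).card :=
                Nat.add_le_add_right (Finset.card_union_le _ _) _
      _ ≤ c := by rw [Finset.card_sdiff_of_subset hUC, hScard, hTcard, hUcard]; exact huc
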